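/- Every equation is a stable formula, i.e., no equation has the order property. -/

import Mathlib

open FirstOrder FirstOrder.Language Set

universe u v w

namespace Equationality

variable {L : FirstOrder.Language.{u, v}}

section Struc
variable {M : Type w} [L.Structure M]

/-- The instance of the formula `φ(x; y)` at the parameter tuple `b`. -/
def instSet {α β : Type*} (φ : L.Formula (α ⊕ β)) (b : β → M) : Set (α → M) :=
  {a | φ.Realize (Sum.elim a b)}

/-- A sequence of `γ`-tuples indexed by a linear order is indiscernible if any two strictly
increasing finite subsequences satisfy the same formulas. -/
def IsIndiscernible {I : Type*} [LinearOrder I] {γ : Type*} (a : I → γ → M) : Prop :=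
  ∀ (n : ℕ) (i j : Fin n → I), StrictMono i → StrictMono j →
    ∀ φ : L.Formula (Fin n × γ),
      φ.Realize (fun p => a (i p.1) p.2) ↔ φ.Realize (fun p => a (j p.1) p.2)

/-- The complete type of a tuple over `∅`, as the set of formulas it realizes. -/
def typeOf {γ : Type*} (a : γ → M) : Set (L.Formula γ) := {φ | φ.Realize a}

end Struc

variable (T : L.Theory)

/-- `φ(x; y)` is an equation for `T`: in every model of `T`, the family of finite
intersections of instances of `φ` has the descending chain condition. -/
def IsEquation {α β : Type*} (φ : L.Formula (α ⊕ β)) : Prop :=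
  ∀ (M : Theory.ModelType.{u, v, max u v} T) (B : ℕ → Finset (β → M)),
    (Antitone fun n => ⋂ b ∈ B n, instSet φ b) →
    ∃ N, ∀ n, N ≤ n → (⋂ b ∈ B n, instSet φ b) = ⋂ b ∈ B N, instSet φ b

/-- A complete type over `∅` (in the variables `γ`), presented as the set of formulas
realized by some tuple in some model of `T`. -/
def IsRealizedType {γ : Type*} (p : Set (L.Formula γ)) : Prop :=
  ∃ (M : Theory.ModelType.{u, v, max u v} T) (a : γ → M), typeOf a = p

/-- `p ⟶ q`: there are a model of `T`, a tuple `b` and an indiscernible sequence `(aᵢ)`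
with `aᵢ ⊨ p(x, b)` for `i > 0` and `a₀ ⊨ q(x, b)`. -/
def Pf {α β : Type*} (p q : Set (L.Formula (α ⊕ β))) : Prop :=
  ∃ (M : Theory.ModelType.{u, v, max u v} T) (b : β → M) (a : ℕ → α → M),
    IsIndiscernible (L := L) a ∧ (∀ i : ℕ, 0 < i → typeOf (Sum.elim (a i) b) = p) ∧
      typeOf (Sum.elim (a 0) b) = q

/-- Every equation is a stable formula, i.e. no equation has the order property:
there is no sequence `(aᵢ, bᵢ)_{i ∈ ℕ}` in a model of `T` such that `φ(aᵢ, bⱼ)` holds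
if and only if `i < j`. -/
theorem isEquation_no_order_property {α β : Type (max u v)} [Finite α] [Finite β]
    (φ : L.Formula (α ⊕ β)) (h : IsEquation T φ) :
    ¬ ∃ (M : Theory.ModelType.{u, v, max u v} T) (a : ℕ → α → M) (b : ℕ → β → M),
        ∀ i j : ℕ, φ.Realize (Sum.elim (a i) (b j)) ↔ i < j := by
  classical
  rintro ⟨M, a, b, hab⟩
  -- ultrafilter extending atTop
  let U : Ultrafilter ℕ := Ultrafilter.of Filter.atTop
  have hU : (U : Filter ℕ) ≤ Filter.atTop := Ultrafilter.of_le _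
  let N := (U : Filter ℕ).Product (fun _ : ℕ => (M : Type (max u v)))
  haveI : N ⊨ T := ⟨fun ψ hψ =>
    (Ultraproduct.sentence_realize ψ).2 (Filter.Eventually.of_forall fun _ =>
      M.is_model.realize_of_mem ψ hψ)⟩
  let MT : Theory.ModelType.{u, v, max u v} T := ⟨N⟩
  let g : ℕ → ℕ → ℕ := fun i n => (n - i) * n
  let a' : ℕ → α → N := fun i x => (↑(fun n => a (g i n) x) : N)
  let b' : ℕ → β → N := fun j y => (↑(fun n => b (g j n) y) : N)
  have key : ∀ i j : ℕ, φ.Realize (Sum.elim (a' i) (b' j)) ↔ j < i := by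
    intro i j
    have hx : Sum.elim (a' i) (b' j) =
        fun k => (↑(Sum.elim (fun x n => a (g i n) x) (fun y n => b (g j n) y) k) : N) := by
      funext k; cases k <;> rfl
    rw [hx]
    refine (Ultraproduct.realize_formula_cast (u := U) (M := fun _ : ℕ => (M : Type (max u v))) φ _).trans ?_
    have hpt : ∀ n : ℕ,
        (φ.Realize fun k =>
          (Sum.elim (fun x m => a (g i m) x) (fun y m => b (g j m) y) k) n)
        ↔ g i n < g j n := by
      intro n
      have : (fun k =>
          (Sum.elim (fun x m => a (g i m) x) (fun y m => b (g j m) y) k) n)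
          = Sum.elim (a (g i n)) (b (g j n)) := by
        funext k; cases k <;> rfl
      rw [this, hab]
    simp only [hpt]
    constructor
    · intro hev
      by_contra hij
      push_neg at hij
      have : ∀ n, ¬ g i n < g j n := by
        intro n
        simp only [g, not_lt]
        exact Nat.mul_le_mul_right _ (Nat.sub_le_sub_left hij n)
      rcases (hev.and (Filter.Eventually.of_forall this)).exists with ⟨n, h1, h2⟩
      exact h2 h1
    · intro hij
      apply Filter.Eventually.filter_mono hU
      filter_upwards [Filter.eventually_ge_atTop (i + 1)] with n hn
      have h1 : n - i < n - j := by omega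
      have h2 : 0 < n := by omega
      exact Nat.mul_lt_mul_of_lt_of_le h1 le_rfl h2
  -- the descending chain
  let B : ℕ → Finset (β → N) := fun k => (Finset.range k).image b'
  have hmem : ∀ (x : α → N) (k : ℕ),
      x ∈ (⋂ c ∈ B k, instSet φ c) ↔ ∀ j < k, φ.Realize (Sum.elim x (b' j)) := by
    intro x k
    simp only [Set.mem_iInter, B, Finset.mem_image, Finset.mem_range, instSet, Set.mem_setOf_eq]
    constructor
    · intro hx j hj; exact hx _ ⟨j, hj, rfl⟩
    · rintro hx c ⟨j, hj, rfl⟩; exact hx j hj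
  have hAnti : Antitone fun n => ⋂ c ∈ B n, instSet φ c := by
    intro m n hmn x hx
    rw [hmem] at hx ⊢
    exact fun j hj => hx j (lt_of_lt_of_le hj hmn)
  obtain ⟨K, hK⟩ := h MT B hAnti
  have h1 : a' K ∈ ⋂ c ∈ B K, instSet φ c := by
    rw [hmem]; intro j hj; exact (key K j).2 hj
  have h2 : a' K ∉ ⋂ c ∈ B (K + 1), instSet φ c := by
    rw [hmem]
    intro hx
    exact absurd ((key K K).1 (hx K (Nat.lt_succ_self K))) (lt_irrefl K)
  rw [hK (K + 1) (Nat.le_succ K)] at h2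
  exact h2 h1

end Equationality
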